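/- Let n ≥ 2 and λ, λ₀₀ > 0. With ṽ defined by the complete-graph recursion (ṽ_n = λ₀₀/λ and ṽ_j = (λ₀₀ + (j(n−j)λ/(n−1))·ṽ_{j+1}) / (jλ/n + j(n−j)λ/(n−1)) for 1 ≤ j ≤ n−1), the value ṽ_1 satisfies ṽ_1 ≤ (λ₀₀/λ)·∑_{k=1}^{n} 1/k. -/

import Mathlib

lemma key0 (N J S : ℝ) (hN : 2 ≤ N) (hJ : 1 ≤ J) (hJN : J ≤ N - 1)
    (hSJ : S * J ≤ N - J) :
    (1 + J * N * S / (N - 1)) / (J / N + J * (N - J) / (N - 1))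
    ≤ (N / (N - J + 1)) * (1 / J + S) := by
  have hN0 : (0:ℝ) < N := by linarith
  have hN1 : (0:ℝ) < N - 1 := by linarith
  have hJ0 : (0:ℝ) < J := by linarith
  have hNJ : (0:ℝ) < N - J := by linarith
  have hNJ1 : (0:ℝ) < N - J + 1 := by linarith
  rw [div_le_iff₀ (by positivity)]
  have key : (N / (N - J + 1)) * (1 / J + S) * (J / N + J * (N - J) / (N - 1))
      - (1 + J * N * S / (N - 1)) = ((N - J) - S * J) / ((N - J + 1) * (N - 1)) := by
    field_simp
    ring
  have h0 : 0 ≤ ((N - J) - S * J) / ((N - J + 1) * (N - 1)) :=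
    div_nonneg (by linarith) (by positivity)
  linarith

lemma key_step (N J S lam lam00 : ℝ) (hN : 2 ≤ N) (hJ : 1 ≤ J) (hJN : J ≤ N - 1)
    (hSJ : S * J ≤ N - J) (hlam : 0 < lam) (hlam00 : 0 < lam00) :
    (lam00 + (J * (N - J) * lam / (N - 1)) * ((lam00 / lam) * (N / (N - J)) * S)) /
      (J * lam / N + J * (N - J) * lam / (N - 1))
    ≤ (lam00 / lam) * (N / (N - J + 1)) * (1 / J + S) := by
  have hN0 : (0:ℝ) < N := by linarith
  have hN1 : (0:ℝ) < N - 1 := by linarith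
  have hJ0 : (0:ℝ) < J := by linarith
  have hNJ : (0:ℝ) < N - J := by linarith
  have h1 : (0:ℝ) < J * lam / N + J * (N - J) * lam / (N - 1) := by positivity
  have h2 : (0:ℝ) < J / N + J * (N - J) / (N - 1) := by positivity
  have heq : (lam00 + (J * (N - J) * lam / (N - 1)) * ((lam00 / lam) * (N / (N - J)) * S)) /
      (J * lam / N + J * (N - J) * lam / (N - 1))
      = (lam00 / lam) * ((1 + J * N * S / (N - 1)) / (J / N + J * (N - J) / (N - 1))) := by
    rw [div_eq_iff (ne_of_gt h1)]
    field_simp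
  rw [heq]
  refine le_trans (mul_le_mul_of_nonneg_left (key0 N J S hN hJ hJN hSJ)
    (le_of_lt (div_pos hlam00 hlam))) (le_of_eq (by ring))

/-- For the complete-graph recursion, ṽ₁ ≤ (λ₀₀/λ)·∑_{k=1}^{n} 1/k. -/
theorem complete_graph_age_upper_bound
    (n : ℕ) (hn : 2 ≤ n) (lam lam00 : ℝ) (hlam : 0 < lam) (hlam00 : 0 < lam00)
    (v : ℕ → ℝ) (hvn : v n = lam00 / lam)
    (hrec : ∀ j : ℕ, 1 ≤ j → j ≤ n - 1 →
      v j = (lam00 + ((j : ℝ) * ((n : ℝ) - j) * lam / ((n : ℝ) - 1)) * v (j + 1)) /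
            ((j : ℝ) * lam / n + (j : ℝ) * ((n : ℝ) - j) * lam / ((n : ℝ) - 1))) :
    v 1 ≤ (lam00 / lam) * ∑ k ∈ Finset.Icc 1 n, (1 : ℝ) / k := by
  have hN : (2:ℝ) ≤ (n:ℝ) := by exact_mod_cast hn
  have hn0 : (0:ℝ) < (n:ℝ) := by linarith
  have main : ∀ d : ℕ, d ≤ n - 1 →
      v (n - d) ≤ (lam00 / lam) * ((n:ℝ) / ((d:ℝ) + 1)) * ∑ k ∈ Finset.Icc (n - d) n, (1:ℝ) / k := by
    intro d
    induction d with
    | zero =>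
      intro _
      simp only [Nat.sub_zero, Finset.Icc_self, Finset.sum_singleton, Nat.cast_zero, zero_add,
        div_one]
      rw [hvn]
      apply le_of_eq
      field_simp
    | succ d ih =>
      intro hd
      have hd' : d ≤ n - 1 := Nat.le_of_succ_le hd
      set j : ℕ := n - (d + 1) with hjdef
      have hj1 : 1 ≤ j := by omega
      have hjn : j ≤ n - 1 := by omega
      have hsucc : j + 1 = n - d := by omega
      have hcast : (j:ℝ) = (n:ℝ) - ((d:ℝ) + 1) := by
        rw [hjdef, Nat.cast_sub (by omega)]
        push_cast
        ring
      have hJR : (0:ℝ) < (j:ℝ) := by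
        have : (1:ℝ) ≤ (j:ℝ) := by exact_mod_cast hj1
        linarith
      have hJ1R : (1:ℝ) ≤ (j:ℝ) := by exact_mod_cast hj1
      have hJN : (j:ℝ) ≤ (n:ℝ) - 1 := by
        have : (d:ℝ) ≥ 0 := Nat.cast_nonneg d
        linarith [hcast]
      have hNJ : (0:ℝ) < (n:ℝ) - (j:ℝ) := by
        have : (d:ℝ) ≥ 0 := Nat.cast_nonneg d
        linarith [hcast]
      have hN1 : (0:ℝ) < (n:ℝ) - 1 := by linarith
      -- the tail sum
      set S : ℝ := ∑ k ∈ Finset.Icc (j+1) n, (1:ℝ) / k with hSdef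
      have hins : Finset.Icc j n = insert j (Finset.Icc (j+1) n) := by
        rw [Finset.Icc_add_one_left_eq_Ioc, Finset.Ioc_insert_left (by omega : j ≤ n)]
      have hsum : ∑ k ∈ Finset.Icc j n, (1:ℝ) / k = 1 / (j:ℝ) + S := by
        rw [hins, Finset.sum_insert (by simp)]
      have hSbound : S ≤ ((n:ℝ) - (j:ℝ)) * (1 / (j:ℝ)) := by
        have hb : ∀ k ∈ Finset.Icc (j+1) n, (1:ℝ) / k ≤ 1 / (j:ℝ) := by
          intro k hk
          simp only [Finset.mem_Icc] at hk
          apply one_div_le_one_div_of_le hJR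
          exact_mod_cast Nat.le_of_succ_le hk.1
        have hcard := Finset.sum_le_card_nsmul _ _ _ hb
        rw [Nat.card_Icc, nsmul_eq_mul] at hcard
        have hc : ((n + 1 - (j + 1) : ℕ) : ℝ) = (n:ℝ) - (j:ℝ) := by
          rw [Nat.cast_sub (by omega)]
          push_cast
          ring
        rw [hc] at hcard
        exact hcard
      have hSJ : S * (j:ℝ) ≤ (n:ℝ) - (j:ℝ) := by
        calc S * (j:ℝ) ≤ (((n:ℝ) - (j:ℝ)) * (1 / (j:ℝ))) * (j:ℝ) :=
              mul_le_mul_of_nonneg_right hSbound (le_of_lt hJR)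
          _ = (n:ℝ) - (j:ℝ) := by field_simp
      -- the IH in usable form
      have hIH := ih hd'
      rw [← hsucc] at hIH
      have hdJ : (d:ℝ) + 1 = (n:ℝ) - (j:ℝ) := by linarith [hcast]
      rw [hdJ] at hIH
      -- apply the recursion
      rw [hrec j hj1 hjn, hsum]
      have hdJ1 : ((d + 1 : ℕ):ℝ) + 1 = (n:ℝ) - (j:ℝ) + 1 := by
        push_cast
        linarith [hcast]
      rw [hdJ1]
      have hB : (0:ℝ) < (j:ℝ) * lam / n + (j:ℝ) * ((n:ℝ) - j) * lam / ((n:ℝ) - 1) :=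
        add_pos (div_pos (mul_pos hJR hlam) hn0)
          (div_pos (mul_pos (mul_pos hJR hNJ) hlam) hN1)
      have hc : (0:ℝ) ≤ (j:ℝ) * ((n:ℝ) - j) * lam / ((n:ℝ) - 1) :=
        le_of_lt (div_pos (mul_pos (mul_pos hJR hNJ) hlam) hN1)
      calc (lam00 + ((j:ℝ) * ((n:ℝ) - j) * lam / ((n:ℝ) - 1)) * v (j + 1)) /
            ((j:ℝ) * lam / n + (j:ℝ) * ((n:ℝ) - j) * lam / ((n:ℝ) - 1))
          ≤ (lam00 + ((j:ℝ) * ((n:ℝ) - j) * lam / ((n:ℝ) - 1)) *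
              ((lam00 / lam) * ((n:ℝ) / ((n:ℝ) - (j:ℝ))) * S)) /
            ((j:ℝ) * lam / n + (j:ℝ) * ((n:ℝ) - j) * lam / ((n:ℝ) - 1)) := by
            have hnum : lam00 + ((j:ℝ) * ((n:ℝ) - j) * lam / ((n:ℝ) - 1)) * v (j + 1)
                ≤ lam00 + ((j:ℝ) * ((n:ℝ) - j) * lam / ((n:ℝ) - 1)) *
                  ((lam00 / lam) * ((n:ℝ) / ((n:ℝ) - (j:ℝ))) * S) :=
              add_le_add_right (mul_le_mul_of_nonneg_left hIH hc) lam00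
            exact (div_le_div_iff_of_pos_right hB).mpr hnum
        _ ≤ (lam00 / lam) * ((n:ℝ) / ((n:ℝ) - (j:ℝ) + 1)) * (1 / (j:ℝ) + S) :=
            key_step (n:ℝ) (j:ℝ) S lam lam00 hN hJ1R hJN hSJ hlam hlam00
  have h1 : (1:ℕ) = n - (n - 1) := by omega
  have := main (n - 1) le_rfl
  rw [← h1] at this
  refine this.trans ?_
  have hcast2 : ((n - 1 : ℕ):ℝ) + 1 = (n:ℝ) := by
    rw [Nat.cast_sub (by omega)]
    push_cast
    ring
  rw [hcast2, div_self (ne_of_gt hn0), mul_one]
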